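/- For integers 0 ≤ k ≤ l with l ≥ 1 (so that f is non-constant), let f(x) = Σ_{i=k}^{l} x^i/i!. Then the function h(x) = x·(f'(x)/f(x)) − x·(f'(x)/f(x))·log(f'(x)/f(x)) − log f(x) is nonnegative for all x > 0. -/

import Mathlib

/-- For `0 ≤ k ≤ l` with `l ≥ 1`, let `f x = ∑_{i=k}^{l} x^i / i!`. Then the
function `h x = x (f'/f)(x) - x (f'/f)(x) log((f'/f)(x)) - log f(x)` is nonnegative on
`(0, ∞)`. -/
theorem h_function_nonneg
    (k l : ℕ) (hkl : k ≤ l) (hl : 1 ≤ l)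
    (f : ℝ → ℝ) (hf : f = fun x => ∑ i ∈ Finset.Icc k l, x ^ i / (Nat.factorial i : ℝ)) :
    ∀ x : ℝ, 0 < x →
      0 ≤ x * (deriv f x / f x) - x * (deriv f x / f x) * Real.log (deriv f x / f x) -
        Real.log (f x) := by
  intro x hx
  set S := Finset.Icc k l with hS
  have hlS : l ∈ S := Finset.mem_Icc.2 ⟨hkl, le_rfl⟩
  have hlpos : (0:ℝ) < (l:ℝ) := by exact_mod_cast hl
  have hFval : f x = ∑ i ∈ S, x ^ i / (Nat.factorial i : ℝ) := by rw [hf]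
  have hFpos : 0 < f x := by
    rw [hFval]
    exact Finset.sum_pos (fun i _ => by positivity) ⟨l, hlS⟩
  have hDval : deriv f x = ∑ i ∈ S, (i:ℝ) * x ^ (i-1) / (Nat.factorial i : ℝ) := by
    rw [hf]
    have h1 : HasDerivAt (fun y : ℝ => ∑ i ∈ S, y ^ i / (Nat.factorial i : ℝ))
        (∑ i ∈ S, (i:ℝ) * x ^ (i-1) / (Nat.factorial i : ℝ)) x := by
      apply HasDerivAt.fun_sum
      intro i _
      simpa using (hasDerivAt_pow i x).div_const (Nat.factorial i : ℝ)
    exact h1.deriv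
  have hDpos : 0 < deriv f x := by
    rw [hDval]
    refine Finset.sum_pos' (fun i _ => by positivity) ⟨l, hlS, by positivity⟩
  set F := f x with hF
  set D := deriv f x with hD
  set u := x * (D / F) with hu
  have hupos : 0 < u := by positivity
  -- p and q
  set p : ℕ → ℝ := fun i => x ^ i / (Nat.factorial i : ℝ) / F with hp
  set q : ℕ → ℝ := fun i => u ^ i * Real.exp (-u) / (Nat.factorial i : ℝ) with hq
  have hppos : ∀ i, 0 < p i := fun i => by positivity
  have hqpos : ∀ i, 0 < q i := fun i => by positivity
  -- sum of p is 1
  have hpsum : ∑ i ∈ S, p i = 1 := by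
    rw [hp]
    rw [← Finset.sum_div, ← hFval, div_self hFpos.ne']
  -- sum of i * p i is u
  have hipsum : ∑ i ∈ S, (i:ℝ) * p i = u := by
    have : ∀ i ∈ S, (i:ℝ) * p i = x * ((i:ℝ) * x ^ (i-1) / (Nat.factorial i : ℝ)) / F := by
      intro i _
      rw [hp]
      cases i with
      | zero => simp
      | succ n =>
        simp only [hp, Nat.add_sub_cancel]
        have hfac : (0:ℝ) < ((n+1).factorial : ℝ) := by positivity
        field_simp
        ring
    rw [Finset.sum_congr rfl this, ← Finset.sum_div, ← Finset.mul_sum, ← hDval, hu]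
    ring
  -- sum of q is at most 1
  have hqsum : ∑ i ∈ S, q i ≤ 1 := by
    have h1 : ∑ i ∈ S, u ^ i / (Nat.factorial i : ℝ) ≤ Real.exp u := by
      refine le_trans ?_ (Real.sum_le_exp_of_nonneg hupos.le (l+1))
      apply Finset.sum_le_sum_of_subset_of_nonneg
      · intro i hi
        simp only [Finset.mem_range]
        exact Nat.lt_succ_of_le (Finset.mem_Icc.1 hi).2
      · intro i _ _; positivity
    have : ∑ i ∈ S, q i = (∑ i ∈ S, u ^ i / (Nat.factorial i : ℝ)) * Real.exp (-u) := by
      rw [Finset.sum_mul]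
      exact Finset.sum_congr rfl fun i _ => by rw [hq]; ring
    rw [this, Real.exp_neg]
    rw [← Real.exp_neg] at *
    calc (∑ i ∈ S, u ^ i / (Nat.factorial i : ℝ)) * Real.exp (-u)
        ≤ Real.exp u * Real.exp (-u) := by
          apply mul_le_mul_of_nonneg_right h1 (Real.exp_pos _).le
      _ = 1 := by rw [← Real.exp_add]; simp
  -- pointwise inequality
  have hpoint : ∀ i ∈ S, p i - q i ≤ p i * ((i:ℝ) * Real.log (x / u) + u - Real.log F) := by
    intro i _
    have hlogpq : Real.log (p i / q i) = (i:ℝ) * Real.log (x / u) + u - Real.log F := by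
      have hpq : p i / q i = (x / u) ^ i * Real.exp u / F := by
        rw [hp, hq, div_pow, Real.exp_neg]
        have h1 : (0:ℝ) < (Nat.factorial i : ℝ) := by positivity
        field_simp
      rw [hpq, Real.log_div (by positivity) hFpos.ne', Real.log_mul (by positivity)
        (Real.exp_pos _).ne', Real.log_pow, Real.log_exp]
    rw [← hlogpq]
    have h2 : Real.log (q i / p i) ≤ q i / p i - 1 :=
      Real.log_le_sub_one_of_pos (by positivity)
    have h3 : Real.log (q i / p i) = - Real.log (p i / q i) := by
      rw [← Real.log_inv]
      congr 1
      rw [inv_div]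
    rw [h3] at h2
    have h4 := mul_le_mul_of_nonneg_left h2 (hppos i).le
    have h5 : p i * (q i / p i) = q i := by rw [mul_div_assoc']; exact mul_div_cancel_left₀ _ (hppos i).ne'
    rw [mul_sub, h5, mul_one, mul_neg] at h4
    linarith
  -- sum it up
  have hsum : (∑ i ∈ S, p i) - (∑ i ∈ S, q i) ≤
      ∑ i ∈ S, p i * ((i:ℝ) * Real.log (x / u) + u - Real.log F) := by
    rw [← Finset.sum_sub_distrib]
    exact Finset.sum_le_sum hpoint
  have hRHS : ∑ i ∈ S, p i * ((i:ℝ) * Real.log (x / u) + u - Real.log F)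
      = u * Real.log (x / u) + u - Real.log F := by
    have : ∀ i ∈ S, p i * ((i:ℝ) * Real.log (x / u) + u - Real.log F)
        = Real.log (x / u) * ((i:ℝ) * p i) + (u - Real.log F) * p i := by
      intro i _; ring
    rw [Finset.sum_congr rfl this, Finset.sum_add_distrib, ← Finset.mul_sum, ← Finset.mul_sum,
      hipsum, hpsum]
    ring
  have hkey : 0 ≤ u * Real.log (x / u) + u - Real.log F := by
    rw [← hRHS]
    refine le_trans ?_ hsum
    rw [hpsum]
    linarith [hqsum]
  -- rewrite the goal
  have hlogxu : Real.log (x / u) = - Real.log (D / F) := by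
    have hxu : x / u = (D / F)⁻¹ := by
      rw [hu]
      field_simp
    rw [hxu, Real.log_inv]
  rw [hlogxu] at hkey
  linarith
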